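/- Let G be a group whose lower central series G = γ₀(G) ⊇ γ₁(G) = [G,G] ⊇ γ₂(G) ⊇ ⋯ satisfies ⋂ₙ γₙ(G) = {1}, and suppose that for every n the abelian quotient group γₙ(G)/γₙ₊₁(G) admits a translation-invariant linear order. Then for every translation-invariant linear order ≼ on the abelianization G/[G,G], there exists a left-invariant linear order ≤ on G such that for all g, h ∈ G whose images ḡ, h̄ in G/[G,G] are distinct, one has g ≤ h if and only if ḡ ≼ h̄. (The paper calls such an order a lexicographic ordering on G.) -/

import Mathlib

section ConeFacts
variable {H : Type*} [Group H] [LinearOrder H]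

lemma lo_le_iff (h : ∀ a b c : H, a ≤ b → c * a ≤ c * b) (a b : H) :
    a ≤ b ↔ 1 ≤ a⁻¹ * b := by
  constructor
  · intro hab
    simpa using h a b a⁻¹ hab
  · intro hab
    simpa [mul_assoc] using h 1 (a⁻¹ * b) a hab

lemma lo_lt_iff (h : ∀ a b c : H, a ≤ b → c * a ≤ c * b) (a b : H) :
    a < b ↔ 1 < a⁻¹ * b := by
  rw [lt_iff_le_and_ne, lt_iff_le_and_ne, lo_le_iff h]
  constructor
  · rintro ⟨h1, h2⟩
    refine ⟨h1, fun hc => h2 ?_⟩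
    simpa using congrArg (a * ·) hc
  · rintro ⟨h1, h2⟩
    refine ⟨h1, fun hc => h2 ?_⟩
    subst hc; simp

lemma lo_one_lt_mul (h : ∀ a b c : H, a ≤ b → c * a ≤ c * b) {a b : H}
    (ha : 1 < a) (hb : 1 < b) : 1 < a * b := by
  have : a * 1 ≤ a * b := h 1 b a hb.le
  rw [mul_one] at this
  exact lt_of_lt_of_le ha this

lemma lo_one_lt_inv (h : ∀ a b c : H, a ≤ b → c * a ≤ c * b) {a : H}
    (ha : 1 < a) : ¬ (1 < a⁻¹) := by
  intro hc
  have : a⁻¹ * 1 ≤ a⁻¹ * a := h 1 a a⁻¹ ha.le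
  simp only [mul_one, inv_mul_cancel] at this
  exact absurd (lt_of_lt_of_le hc this) (lt_irrefl _)

lemma lo_trichot (h : ∀ a b c : H, a ≤ b → c * a ≤ c * b) {a : H}
    (ha : a ≠ 1) : 1 < a ∨ 1 < a⁻¹ := by
  rcases le_total 1 a with h1 | h1
  · exact Or.inl (lt_of_le_of_ne h1 (Ne.symm ha))
  · right
    have : a⁻¹ * a ≤ a⁻¹ * 1 := h a 1 a⁻¹ h1
    simp only [inv_mul_cancel, mul_one] at this
    exact lt_of_le_of_ne this (by simpa using ha)

end ConeFacts

theorem lexicographic_left_order_from_lower_central_series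
    {G : Type*} [Group G]
    (hres : ⨅ n : ℕ, (⊤ : Subgroup G).lowerCentralSeries n = ⊥)
    (hord : ∀ n : ℕ,
      ∃ lo : LinearOrder
        (((⊤ : Subgroup G).lowerCentralSeries n) ⧸
          (((⊤ : Subgroup G).lowerCentralSeries (n + 1)).subgroupOf ((⊤ : Subgroup G).lowerCentralSeries n))),
        ∀ a b c, lo.le a b → lo.le (c * a) (c * b))
    (loA : LinearOrder (Abelianization G))
    (hA : ∀ a b c : Abelianization G, loA.le a b → loA.le (c * a) (c * b)) :
    ∃ lo : LinearOrder G,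
      (∀ a b c : G, lo.le a b → lo.le (c * a) (c * b)) ∧
      ∀ g h : G, Abelianization.of g ≠ Abelianization.of h →
        (lo.le g h ↔ loA.le (Abelianization.of g) (Abelianization.of h)) := by
  classical
  letI := loA
  choose qlo qmono using hord
  have hanti : ∀ {i j : ℕ}, i ≤ j → (⊤ : Subgroup G).lowerCentralSeries j ≤ (⊤ : Subgroup G).lowerCentralSeries i :=
    fun h => Subgroup.lowerCentralSeries_antitone ⊤ h
  -- membership in γ 1 is the kernel of the abelianization map
  have hker : ∀ g : G, Abelianization.of g = 1 ↔ g ∈ (⊤ : Subgroup G).lowerCentralSeries 1 := by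
    intro g
    rw [Subgroup.top_lowerCentralSeries_one]
    exact QuotientGroup.eq_one_iff g
  -- every nontrivial element leaves the series
  have hdep : ∀ g : G, g ≠ 1 → ∃ n, g ∉ (⊤ : Subgroup G).lowerCentralSeries (n + 1) := by
    intro g hg
    by_contra hc
    push_neg at hc
    apply hg
    have hm : g ∈ ⨅ n : ℕ, (⊤ : Subgroup G).lowerCentralSeries n := by
      rw [Subgroup.mem_iInf]
      intro n
      cases n with
      | zero => rw [Subgroup.lowerCentralSeries_zero]; trivial
      | succ n => exact hc n
    rw [hres] at hm
    exact hm
  -- the positive cone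
  set Pos : G → Prop := fun g =>
    (g ∉ (⊤ : Subgroup G).lowerCentralSeries 1 ∧ loA.lt 1 (Abelianization.of g)) ∨
    (∃ n : ℕ, ∃ hg : g ∈ (⊤ : Subgroup G).lowerCentralSeries (n + 1), g ∉ (⊤ : Subgroup G).lowerCentralSeries (n + 2) ∧
      (qlo (n + 1)).lt 1 (QuotientGroup.mk
        (⟨g, hg⟩ : (⊤ : Subgroup G).lowerCentralSeries (n + 1)))) with hPos
  -- quotient map fact
  have mk_eq_one : ∀ (n : ℕ) (g : G) (hg : g ∈ (⊤ : Subgroup G).lowerCentralSeries (n + 1)),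
      (QuotientGroup.mk (⟨g, hg⟩ : (⊤ : Subgroup G).lowerCentralSeries (n + 1)) :
        ((⊤ : Subgroup G).lowerCentralSeries (n + 1)) ⧸
          (((⊤ : Subgroup G).lowerCentralSeries (n + 2)).subgroupOf ((⊤ : Subgroup G).lowerCentralSeries (n + 1)))) = 1 ↔
      g ∈ (⊤ : Subgroup G).lowerCentralSeries (n + 2) := by
    intro n g hg
    rw [QuotientGroup.eq_one_iff, Subgroup.mem_subgroupOf]
  have mk_eq : ∀ (n : ℕ) (g h : G) (hg : g ∈ (⊤ : Subgroup G).lowerCentralSeries (n + 1))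
      (hh : h ∈ (⊤ : Subgroup G).lowerCentralSeries (n + 1)), g⁻¹ * h ∈ (⊤ : Subgroup G).lowerCentralSeries (n + 2) →
      (QuotientGroup.mk (⟨g, hg⟩ : (⊤ : Subgroup G).lowerCentralSeries (n + 1)) :
        ((⊤ : Subgroup G).lowerCentralSeries (n + 1)) ⧸
          (((⊤ : Subgroup G).lowerCentralSeries (n + 2)).subgroupOf ((⊤ : Subgroup G).lowerCentralSeries (n + 1)))) =
      QuotientGroup.mk (⟨h, hh⟩ : (⊤ : Subgroup G).lowerCentralSeries (n + 1)) := by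
    intro n g h hg hh hmem
    apply QuotientGroup.eq.mpr
    rw [Subgroup.mem_subgroupOf]
    exact hmem
  -- positivity of an element at its level
  have pos_ne_one : ∀ g : G, Pos g → g ≠ 1 := by
    rintro g (⟨h1, _⟩ | ⟨n, _, h2, _⟩) rfl
    · exact h1 (Subgroup.one_mem _)
    · exact h2 (Subgroup.one_mem _)
  -- closure under multiplication
  have pos_mul : ∀ g h : G, Pos g → Pos h → Pos (g * h) := by
    rintro g h (⟨hg1, hg2⟩ | ⟨n, hgn, hgn2, hglt⟩) (⟨hh1, hh2⟩ | ⟨m, hhm, hhm2, hhlt⟩)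
    · -- both at level 0
      left
      have hlt : loA.lt 1 (Abelianization.of (g * h)) := by
        rw [map_mul]
        exact lo_one_lt_mul hA hg2 hh2
      refine ⟨fun hc => ?_, hlt⟩
      exact absurd ((hker _).mpr hc) (ne_of_lt hlt).symm
    · -- g at level 0, h deeper
      left
      have hh1 : h ∈ (⊤ : Subgroup G).lowerCentralSeries 1 := hanti (by omega) hhm
      have hof : Abelianization.of (g * h) = Abelianization.of g := by
        rw [map_mul, (hker h).mpr hh1, mul_one]
      refine ⟨fun hc => hg1 ?_, by rw [hof]; exact hg2⟩
      have hge : g = (g * h) * h⁻¹ := by group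
      rw [hge]
      exact Subgroup.mul_mem _ hc (Subgroup.inv_mem _ hh1)
    · -- h at level 0, g deeper
      left
      have hg1 : g ∈ (⊤ : Subgroup G).lowerCentralSeries 1 := hanti (by omega) hgn
      have hof : Abelianization.of (g * h) = Abelianization.of h := by
        rw [map_mul, (hker g).mpr hg1, one_mul]
      refine ⟨fun hc => hh1 ?_, by rw [hof]; exact hh2⟩
      have hhe : h = g⁻¹ * (g * h) := by group
      rw [hhe]
      exact Subgroup.mul_mem _ (Subgroup.inv_mem _ hg1) hc
    · -- both deeper
      right
      rcases lt_trichotomy n m with hnm | rfl | hnm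
      · -- n < m : h is deeper, product looks like g
        have hhn : h ∈ (⊤ : Subgroup G).lowerCentralSeries (n + 2) := hanti (by omega) hhm
        have hghn : g * h ∈ (⊤ : Subgroup G).lowerCentralSeries (n + 1) :=
          Subgroup.mul_mem _ hgn (hanti (by omega) hhn)
        have hmk := mk_eq n (g * h) g hghn hgn
          (by
            have : (g * h)⁻¹ * g = h⁻¹ * (g⁻¹ * g) := by group
            rw [this]
            simpa using Subgroup.inv_mem _ hhn)
        refine ⟨n, hghn, fun hc => ?_, by rw [hmk]; exact hglt⟩
        rw [← mk_eq_one n (g * h) hghn, hmk] at hc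
        exact hgn2 ((mk_eq_one n g hgn).mp hc)
      · -- n = m
        have hghn : g * h ∈ (⊤ : Subgroup G).lowerCentralSeries (n + 1) := Subgroup.mul_mem _ hgn hhm
        have hmk : (QuotientGroup.mk (⟨g * h, hghn⟩ : (⊤ : Subgroup G).lowerCentralSeries (n + 1)) :
            ((⊤ : Subgroup G).lowerCentralSeries (n + 1)) ⧸
              (((⊤ : Subgroup G).lowerCentralSeries (n + 2)).subgroupOf ((⊤ : Subgroup G).lowerCentralSeries (n + 1)))) =
            QuotientGroup.mk (⟨g, hgn⟩ : (⊤ : Subgroup G).lowerCentralSeries (n + 1)) *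
            QuotientGroup.mk (⟨h, hhm⟩ : (⊤ : Subgroup G).lowerCentralSeries (n + 1)) := rfl
        letI := qlo (n + 1)
        have hlt : (qlo (n + 1)).lt 1
            (QuotientGroup.mk (⟨g * h, hghn⟩ : (⊤ : Subgroup G).lowerCentralSeries (n + 1))) := by
          rw [hmk]
          exact lo_one_lt_mul (qmono (n + 1)) hglt hhlt
        refine ⟨n, hghn, fun hc => ?_, hlt⟩
        rw [← mk_eq_one n (g * h) hghn] at hc
        exact absurd hc (ne_of_lt hlt).symm
      · -- m < n : g is deeper, product looks like h
        have hgm : g ∈ (⊤ : Subgroup G).lowerCentralSeries (m + 2) := hanti (by omega) hgn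
        have hghm : g * h ∈ (⊤ : Subgroup G).lowerCentralSeries (m + 1) :=
          Subgroup.mul_mem _ (hanti (by omega) hgm) hhm
        have hmk := mk_eq m (g * h) h hghm hhm
          (by
            have hcj := Subgroup.Normal.conj_mem (inferInstance : ((⊤ : Subgroup G).lowerCentralSeries (m + 2)).Normal)
              g⁻¹ (Subgroup.inv_mem _ hgm) h⁻¹
            have : (g * h)⁻¹ * h = h⁻¹ * g⁻¹ * h⁻¹⁻¹ := by group
            rw [this]
            exact hcj)
        refine ⟨m, hghm, fun hc => ?_, by rw [hmk]; exact hhlt⟩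
        rw [← mk_eq_one m (g * h) hghm, hmk] at hc
        exact hhm2 ((mk_eq_one m h hhm).mp hc)
  -- the cone and its inverse are disjoint
  have pos_inv : ∀ g : G, Pos g → ¬ Pos g⁻¹ := by
    rintro g (⟨hg1, hg2⟩ | ⟨n, hgn, hgn2, hglt⟩) (⟨hh1, hh2⟩ | ⟨m, hhm, hhm2, hhlt⟩)
    · rw [map_inv] at hh2
      exact lo_one_lt_inv hA hg2 hh2
    · exact hg1 (by simpa using Subgroup.inv_mem _ (hanti (by omega : 1 ≤ m + 1) hhm))
    · exact hh1 (Subgroup.inv_mem _ (hanti (by omega : 1 ≤ n + 1) hgn))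
    · have hnm : n = m := by
        by_contra hne
        rcases lt_or_gt_of_ne hne with h' | h'
        · exact hgn2 (by simpa using Subgroup.inv_mem _ (hanti (by omega : n + 2 ≤ m + 1) hhm))
        · exact hhm2 (Subgroup.inv_mem _ (hanti (by omega : m + 2 ≤ n + 1) hgn))
      subst hnm
      have hmk : (QuotientGroup.mk (⟨g⁻¹, hhm⟩ : (⊤ : Subgroup G).lowerCentralSeries (n + 1)) :
          ((⊤ : Subgroup G).lowerCentralSeries (n + 1)) ⧸
            (((⊤ : Subgroup G).lowerCentralSeries (n + 2)).subgroupOf ((⊤ : Subgroup G).lowerCentralSeries (n + 1)))) =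
          (QuotientGroup.mk (⟨g, hgn⟩ : (⊤ : Subgroup G).lowerCentralSeries (n + 1)))⁻¹ := rfl
      rw [hmk] at hhlt
      exact lo_one_lt_inv (qmono (n + 1)) hglt hhlt
  -- trichotomy
  have pos_total : ∀ g : G, g ≠ 1 → Pos g ∨ Pos g⁻¹ := by
    intro g hg
    have hfind := Nat.find_spec (hdep g hg)
    rcases hfindeq : Nat.find (hdep g hg) with _ | k
    · -- level 0
      rw [hfindeq] at hfind
      have hof : Abelianization.of g ≠ 1 := fun hc => hfind ((hker g).mp hc)
      rcases lo_trichot hA hof with hlt | hlt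
      · exact Or.inl (Or.inl ⟨hfind, hlt⟩)
      · refine Or.inr (Or.inl ⟨fun hc => hfind ?_, by rwa [map_inv]⟩)
        simpa using Subgroup.inv_mem _ hc
    · -- deeper level
      rw [hfindeq] at hfind
      have hgk : g ∈ (⊤ : Subgroup G).lowerCentralSeries (k + 1) :=
        not_not.mp (Nat.find_min (hdep g hg) (hfindeq ▸ k.lt_succ_self))
      have hgk2 : g ∉ (⊤ : Subgroup G).lowerCentralSeries (k + 2) := hfind
      have hne : (QuotientGroup.mk (⟨g, hgk⟩ : (⊤ : Subgroup G).lowerCentralSeries (k + 1)) :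
          ((⊤ : Subgroup G).lowerCentralSeries (k + 1)) ⧸
            (((⊤ : Subgroup G).lowerCentralSeries (k + 2)).subgroupOf ((⊤ : Subgroup G).lowerCentralSeries (k + 1)))) ≠ 1 :=
        fun hc => hgk2 ((mk_eq_one k g hgk).mp hc)
      letI := qlo (k + 1)
      rcases lo_trichot (qmono (k + 1)) hne with hlt | hlt
      · exact Or.inl (Or.inr ⟨k, hgk, hgk2, hlt⟩)
      · refine Or.inr (Or.inr ⟨k, Subgroup.inv_mem _ hgk, fun hc => hgk2 ?_, ?_⟩)
        · simpa using Subgroup.inv_mem _ hc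
        · have hmk : (QuotientGroup.mk (⟨g⁻¹, Subgroup.inv_mem _ hgk⟩ :
              (⊤ : Subgroup G).lowerCentralSeries (k + 1)) :
              ((⊤ : Subgroup G).lowerCentralSeries (k + 1)) ⧸
                (((⊤ : Subgroup G).lowerCentralSeries (k + 2)).subgroupOf ((⊤ : Subgroup G).lowerCentralSeries (k + 1)))) =
              (QuotientGroup.mk (⟨g, hgk⟩ : (⊤ : Subgroup G).lowerCentralSeries (k + 1)))⁻¹ := rfl
          rw [hmk]
          exact hlt
  -- build the linear order
  set myle : G → G → Prop := fun a b => a = b ∨ Pos (a⁻¹ * b) with hmyle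
  have le_refl' : ∀ a : G, myle a a := fun a => Or.inl rfl
  have le_trans' : ∀ a b c : G, myle a b → myle b c → myle a c := by
    rintro a b c (rfl | hab) (rfl | hbc)
    · exact Or.inl rfl
    · exact Or.inr hbc
    · exact Or.inr hab
    · refine Or.inr ?_
      have : a⁻¹ * c = (a⁻¹ * b) * (b⁻¹ * c) := by group
      rw [this]
      exact pos_mul _ _ hab hbc
  have le_antisymm' : ∀ a b : G, myle a b → myle b a → a = b := by
    rintro a b (rfl | hab) hba
    · rfl
    · rcases hba with rfl | hba
      · rfl
      · exfalso
        apply pos_inv _ hab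
        have : (a⁻¹ * b)⁻¹ = b⁻¹ * a := by group
        rw [this]
        exact hba
  have le_total' : ∀ a b : G, myle a b ∨ myle b a := by
    intro a b
    by_cases hab : a = b
    · exact Or.inl (Or.inl hab)
    · have hne : a⁻¹ * b ≠ 1 := fun hc => hab (by
        have := congrArg (a * ·) hc
        simpa using this.symm)
      rcases pos_total _ hne with hp | hp
      · exact Or.inl (Or.inr hp)
      · refine Or.inr (Or.inr ?_)
        have : b⁻¹ * a = (a⁻¹ * b)⁻¹ := by group
        rw [this]
        exact hp
  set lo : LinearOrder G :=
    { le := myle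
      lt := fun a b => myle a b ∧ ¬ myle b a
      le_refl := le_refl'
      le_trans := le_trans'
      lt_iff_le_not_ge := fun _ _ => Iff.rfl
      le_antisymm := le_antisymm'
      le_total := le_total'
      toDecidableLE := fun a b => Classical.propDecidable _ } with hlo
  refine ⟨lo, ?_, ?_⟩
  · -- left invariance
    rintro a b c (rfl | hab)
    · exact Or.inl rfl
    · refine Or.inr ?_
      have : (c * a)⁻¹ * (c * b) = a⁻¹ * b := by group
      rw [this]
      exact hab
  · -- agreement with loA
    intro g h hgh
    have hne : g ≠ h := fun hc => hgh (by rw [hc])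
    have hof : Abelianization.of (g⁻¹ * h) ≠ 1 := by
      rw [map_mul, map_inv]
      intro hc
      apply hgh
      have := congrArg (Abelianization.of g * ·) hc
      simpa using this.symm
    have hnotin : g⁻¹ * h ∉ (⊤ : Subgroup G).lowerCentralSeries 1 := fun hc => hof ((hker _).mpr hc)
    have hposiff : Pos (g⁻¹ * h) ↔ loA.lt 1 (Abelianization.of (g⁻¹ * h)) := by
      constructor
      · rintro (⟨_, h2⟩ | ⟨n, hgn, _, _⟩)
        · exact h2
        · exact absurd (hanti (by omega : 1 ≤ n + 1) hgn) hnotin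
      · intro hlt
        exact Or.inl ⟨hnotin, hlt⟩
    show (g = h ∨ Pos (g⁻¹ * h)) ↔ _
    rw [or_iff_right hne, hposiff]
    have h1 : loA.lt 1 (Abelianization.of (g⁻¹ * h)) ↔
        loA.lt (Abelianization.of g) (Abelianization.of h) := by
      rw [map_mul, map_inv]
      exact (lo_lt_iff hA (Abelianization.of g) (Abelianization.of h)).symm
    rw [h1]
    constructor
    · exact fun hlt => le_of_lt hlt
    · exact fun hle => lt_of_le_of_ne hle hgh
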